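/- For a tangential vector field u on S² with extension ũ to a neighborhood of S², and x ∈ S², one has π_x(ũ(x) × (∇ × ũ)(x)) = (u(x) × x) · (x · (∇ × ũ)(x)), i.e. the projection of ũ × curl ũ onto the tangent plane equals (u × x) times the scalar curl of u. -/

import Mathlib

open RealInnerProductSpace

noncomputable section

/-- ℝ³ with the Euclidean structure. -/
abbrev E3 := EuclideanSpace ℝ (Fin 3)

/-- Cross product on ℝ³. -/
def cross3 (a b : E3) : E3 := WithLp.toLp 2 (crossProduct (a : Fin 3 → ℝ) (b : Fin 3 → ℝ))

/-- Orthogonal projection of ℝ³ onto the tangent plane T_x S². -/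
def projT (x w : E3) : E3 := w - ⟪w, x⟫ • x

/-- For a tangential vector u = u(x) at a point x of the unit sphere (u·x = 0) and any
vector w = (∇ × ũ)(x) ∈ ℝ³, the projection of u × w onto the tangent plane equals
(u × x) multiplied by the scalar curl x·w, i.e.
π_x(ũ(x) × (∇×ũ)(x)) = (x · (∇×ũ)(x)) • (u(x) × x). -/
theorem stmt_1 (x u w : E3) (hx : ‖x‖ = 1) (hu : ⟪u, x⟫ = 0) :
    projT x (cross3 u w) = ⟪x, w⟫ • cross3 u x := by
  have hxx : ⟪x, x⟫ = 1 := by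
    rw [real_inner_self_eq_norm_sq, hx]; norm_num
  have hx2 : x 0 * x 0 + x 1 * x 1 + x 2 * x 2 = 1 := by
    rw [EuclideanSpace.inner_eq_star_dotProduct] at hxx
    simpa [EuclideanSpace.inner_eq_star_dotProduct, dotProduct, Fin.sum_univ_three,
      mul_comm] using hxx
  have hu2 : u 0 * x 0 + u 1 * x 1 + u 2 * x 2 = 0 := by
    simpa [EuclideanSpace.inner_eq_star_dotProduct, dotProduct, Fin.sum_univ_three,
      mul_comm] using hu
  ext i
  simp only [projT, cross3, crossProduct, EuclideanSpace.inner_eq_star_dotProduct,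
    dotProduct, Fin.sum_univ_three]
  fin_cases i <;>
    simp [crossProduct, PiLp.sub_apply, PiLp.smul_apply, smul_eq_mul]
  · linear_combination (-(u 1 * w 2 - u 2 * w 1)) * hx2 + (x 1 * w 2 - x 2 * w 1) * hu2
  · linear_combination (-(u 2 * w 0 - u 0 * w 2)) * hx2 + (x 2 * w 0 - x 0 * w 2) * hu2
  · linear_combination (-(u 0 * w 1 - u 1 * w 0)) * hx2 + (x 0 * w 1 - x 1 * w 0) * hu2
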